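/- For every finite index set A, every h ≥ 1 and every monotone f:ℕ→ℕ, there exists a function g:ℕ→ℕ (depending only on f, h and |A|) such that every A-frame F with h(F) ≤ h, all of whose cluster-restrictions F↾C are f-tunable, is g-tunable. -/

import Mathlib

universe u

/-- A partition of the set `X`: a family of nonempty, pairwise disjoint sets covering `X`. -/
def IsPartition {X : Type*} (P : Set (Set X)) : Prop :=
  (∀ U ∈ P, U.Nonempty) ∧ (∀ U ∈ P, ∀ V ∈ P, U ≠ V → Disjoint U V) ∧ ⋃₀ P = Set.univ

/-- `Q` refines `P`: every element of `Q` is contained in some element of `P`. -/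
def Refines {X : Type*} (Q P : Set (Set X)) : Prop :=
  ∀ u ∈ Q, ∃ v ∈ P, u ⊆ v

/-- A partition `P` is `R`-tuned. -/
def TunedRel {X : Type*} (R : X → X → Prop) (P : Set (Set X)) : Prop :=
  ∀ U ∈ P, ∀ V ∈ P, (∃ a ∈ U, ∃ b ∈ V, R a b) → ∀ a ∈ U, ∃ b ∈ V, R a b

/-- A partition is tuned in the frame `(X, (R_a)_{a∈A})` if it is `R_a`-tuned for each `a`. -/
def TunedFrame {A X : Type*} (R : A → X → X → Prop) (P : Set (Set X)) : Prop :=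
  ∀ a, TunedRel (R a) P

/-- The frame `(X, (R_a)_{a∈A})` is `f`-tunable. -/
def Tunable {A X : Type*} (R : A → X → X → Prop) (f : ℕ → ℕ) : Prop :=
  ∀ P : Set (Set X), IsPartition P → P.Finite →
    ∃ Q : Set (Set X), IsPartition Q ∧ Refines Q P ∧ TunedFrame R Q ∧
      Q.Finite ∧ Q.ncard ≤ f P.ncard

/-- The union `R_F = ⋃_{a∈A} R_a` of the relations of a frame. -/
def unionRel {A X : Type*} (R : A → X → X → Prop) : X → X → Prop :=
  fun x y => ∃ a, R a x y

/-- The cluster of the point `x`: its equivalence class under `R* ∩ (R*)⁻¹`. -/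
def clusterOf {X : Type*} (R : X → X → Prop) (x : X) : Set X :=
  {y | Relation.ReflTransGen R x y ∧ Relation.ReflTransGen R y x}

/-- A strictly ascending chain of `n` points with respect to `Rs` (intended: `Rs = R*`). -/
def IsStrictChain {X : Type*} (Rs : X → X → Prop) (n : ℕ) (x : ℕ → X) : Prop :=
  ∀ i, i + 1 < n → Rs (x i) (x (i + 1)) ∧ ¬ Rs (x (i + 1)) (x i)

/-- The frame with union relation `R` has height at most `h`. -/
def HeightLe {X : Type*} (R : X → X → Prop) (h : ℕ) : Prop :=
  ∀ x : ℕ → X, ¬ IsStrictChain (Relation.ReflTransGen R) (h + 1) x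

-- ==================== auxiliary development ====================
open Classical

namespace Stmt15Aux

variable {A X : Type*} (R : A → X → X → Prop)

/-- one-step relation restricted to a region `Y` -/
def rOn (Y : Set X) : X → X → Prop := fun x y => unionRel R x y ∧ x ∈ Y ∧ y ∈ Y

/-- reachability within `Y` -/
def sOn (Y : Set X) : X → X → Prop := Relation.ReflTransGen (rOn R Y)

/-- cluster of `x` within `Y` -/
def clOn (Y : Set X) (x : X) : Set X := {y | sOn R Y x y ∧ sOn R Y y x}

/-- partition of the set `Y` -/
def POn (Y : Set X) (P : Set (Set X)) : Prop :=
  (∀ U ∈ P, U.Nonempty) ∧ (∀ U ∈ P, ∀ V ∈ P, U ≠ V → Disjoint U V) ∧ ⋃₀ P = Y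

def TunOn (Y : Set X) (g : ℕ → ℕ) : Prop :=
  ∀ P : Set (Set X), POn Y P → P.Finite →
    ∃ Q : Set (Set X), POn Y Q ∧ Refines Q P ∧ TunedFrame R Q ∧
      Q.Finite ∧ Q.ncard ≤ g P.ncard

/-- height of the region `Y` -/
def HOn (Y : Set X) (h : ℕ) : Prop :=
  ∀ x : ℕ → X, ¬ IsStrictChain (sOn R Y) (h + 1) x

/-- top (maximal) part of region `Y` -/
def topOn (Y : Set X) : Set X := {x | x ∈ Y ∧ ∀ y, sOn R Y x y → sOn R Y y x}

variable {R}

lemma sOn_refl {Y : Set X} (x : X) : sOn R Y x x := Relation.ReflTransGen.refl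

lemma sOn_trans {Y : Set X} {x y z : X} (h1 : sOn R Y x y) (h2 : sOn R Y y z) :
    sOn R Y x z := Relation.ReflTransGen.trans h1 h2

lemma mem_right_of_sOn_ne {Y : Set X} {x y : X} (h : sOn R Y x y) (hne : x ≠ y) : y ∈ Y := by
  rcases (Relation.ReflTransGen.cases_tail h) with h | ⟨z, _, hz⟩
  · exact absurd h.symm hne
  · exact hz.2.2

lemma mem_left_of_sOn_ne {Y : Set X} {x y : X} (h : sOn R Y x y) (hne : x ≠ y) : x ∈ Y := by
  rcases (Relation.ReflTransGen.cases_head h) with h | ⟨z, hz, _⟩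
  · exact absurd h hne
  · exact hz.2.1

lemma sOn_mono {Y Z : Set X} (hYZ : Y ⊆ Z) {x y : X} (h : sOn R Y x y) : sOn R Z x y := by
  induction h with
  | refl => exact Relation.ReflTransGen.refl
  | tail _ hstep ih => exact ih.tail ⟨hstep.1, hYZ hstep.2.1, hYZ hstep.2.2⟩

lemma top_upclosed {Y : Set X} {x y : X} (hx : x ∈ topOn R Y) (hxy : sOn R Y x y) :
    y ∈ topOn R Y := by
  rcases eq_or_ne x y with rfl | hne
  · exact hx
  · refine ⟨mem_right_of_sOn_ne hxy hne, fun z hz => ?_⟩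
    have hxz : sOn R Y x z := sOn_trans hxy hz
    exact sOn_trans (hx.2 z hxz) hxy

/-- paths ending outside the top part stay outside the top part -/
lemma sOn_diff_top {Y : Set X} {x y : X} (h : sOn R Y x y) (hy : y ∉ topOn R Y) :
    sOn R (Y \ topOn R Y) x y := by
  induction h using Relation.ReflTransGen.head_induction_on with
  | refl => exact Relation.ReflTransGen.refl
  | head hstep htail ih =>
    have hc := fun hc => hy (top_upclosed hc htail)
    have ha := fun ha => hy (top_upclosed ha (Relation.ReflTransGen.head hstep htail))
    exact Relation.ReflTransGen.head ⟨hstep.1, ⟨hstep.2.1, ha⟩, ⟨hstep.2.2, hc⟩⟩ ih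

/-- paths starting in the top part stay in the top part -/
lemma sOn_top {Y : Set X} {x y : X} (h : sOn R Y x y) (hx : x ∈ topOn R Y) :
    sOn R (topOn R Y) x y := by
  induction h with
  | refl => exact Relation.ReflTransGen.refl
  | tail hs hstep ih =>
    have hb := top_upclosed hx hs
    exact ih.tail ⟨hstep.1, hb, top_upclosed hb (Relation.ReflTransGen.single ⟨hstep.1, hstep.2.1, hstep.2.2⟩)⟩

-- cluster basics

lemma mem_clOn_self {Y : Set X} (x : X) : x ∈ clOn R Y x := ⟨sOn_refl x, sOn_refl x⟩

lemma clOn_subset {Y : Set X} {x : X} (hx : x ∈ Y) : clOn R Y x ⊆ Y := by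
  intro y hy
  rcases eq_or_ne x y with rfl | hne
  · exact hx
  · exact mem_right_of_sOn_ne hy.1 hne

lemma clOn_eq_of_mem {Y : Set X} {x y : X} (hy : y ∈ clOn R Y x) : clOn R Y y = clOn R Y x := by
  ext z
  exact ⟨fun hz => ⟨sOn_trans hy.1 hz.1, sOn_trans hz.2 hy.2⟩,
    fun hz => ⟨sOn_trans hy.2 hz.1, sOn_trans hz.2 hy.1⟩⟩

lemma clOn_top_eq {Y : Set X} {x : X} (hx : x ∈ topOn R Y) :
    clOn R (topOn R Y) x = clOn R Y x := by
  ext y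
  constructor
  · intro hy
    exact ⟨sOn_mono (fun z hz => hz.1) hy.1, sOn_mono (fun z hz => hz.1) hy.2⟩
  · intro hy
    have hyt : y ∈ topOn R Y := top_upclosed hx hy.1
    exact ⟨sOn_top hy.1 hx, sOn_top hy.2 hyt⟩

lemma clOn_diff_top_eq {Y : Set X} {x : X} (hx : x ∉ topOn R Y) :
    clOn R (Y \ topOn R Y) x = clOn R Y x := by
  ext y
  constructor
  · intro hy
    exact ⟨sOn_mono Set.diff_subset hy.1, sOn_mono Set.diff_subset hy.2⟩
  · intro hy
    exact ⟨sOn_diff_top hy.1 (fun hyt => hx (top_upclosed hyt hy.2)),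
      sOn_diff_top hy.2 hx⟩

-- choice of the piece containing a point

noncomputable def pc (P : Set (Set X)) (x : X) : Set X :=
  if h : ∃ p ∈ P, x ∈ p then h.choose else ∅

lemma pc_spec {P : Set (Set X)} {x : X} (h : ∃ p ∈ P, x ∈ p) :
    pc P x ∈ P ∧ x ∈ pc P x := by
  rw [pc, dif_pos h]
  exact ⟨h.choose_spec.1, h.choose_spec.2⟩

lemma pc_mem {Y : Set X} {P : Set (Set X)} (hP : POn Y P) {x : X} (hx : x ∈ Y) :
    pc P x ∈ P ∧ x ∈ pc P x := by
  apply pc_spec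
  have := hP.2.2
  rw [← this] at hx
  rcases hx with ⟨p, hp, hxp⟩
  exact ⟨p, hp, hxp⟩

lemma pc_eq {Y : Set X} {P : Set (Set X)} (hP : POn Y P) {x : X} {p : Set X}
    (hp : p ∈ P) (hxp : x ∈ p) : pc P x = p := by
  have hx : x ∈ Y := by
    have := hP.2.2; rw [← this]; exact ⟨p, hp, hxp⟩
  obtain ⟨h1, h2⟩ := pc_mem hP hx
  by_contra hne
  exact Set.disjoint_left.1 (hP.2.1 _ h1 _ hp hne) h2 hxp

-- injections into Fin

lemma exists_injOn_fin {α : Type*} {s : Set α} (hs : s.Finite) {m : ℕ}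
    (hm : s.ncard ≤ m) (hm0 : 0 < m) : ∃ ι : α → Fin m, Set.InjOn ι s := by
  haveI := hs.fintype
  have hcard : Fintype.card s ≤ m := by
    rwa [Set.ncard_eq_toFinset_card', Set.toFinset_card] at hm
  have : Fintype.card s ≤ Fintype.card (Fin m) := by simpa using hcard
  obtain ⟨e⟩ := Function.Embedding.nonempty_of_card_le this
  haveI : Nonempty (Fin m) := ⟨⟨0, hm0⟩⟩
  refine ⟨fun x => if h : x ∈ s then e ⟨x, h⟩ else Classical.arbitrary _, ?_⟩
  intro x hx y hy hxy
  simp only [dif_pos hx, dif_pos hy] at hxy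
  exact congrArg Subtype.val (e.injective hxy)

-- fiber partitions

def fibPart (Y : Set X) {K : Type*} (c : X → K) : Set (Set X) :=
  {U | (∃ k : K, U = {x ∈ Y | c x = k}) ∧ U.Nonempty}

lemma fibPart_POn (Y : Set X) {K : Type*} (c : X → K) : POn Y (fibPart Y c) := by
  refine ⟨fun U hU => hU.2, ?_, ?_⟩
  · rintro U ⟨⟨k, rfl⟩, -⟩ V ⟨⟨k', rfl⟩, -⟩ hne
    have hkk : k ≠ k' := fun h => hne (by rw [h])
    rw [Set.disjoint_left]
    rintro x ⟨-, hx⟩ ⟨-, hx'⟩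
    exact hkk (hx ▸ hx' ▸ rfl)
  · ext x
    constructor
    · rintro ⟨U, ⟨⟨k, rfl⟩, -⟩, hx⟩
      exact hx.1
    · intro hx
      exact ⟨{y ∈ Y | c y = c x}, ⟨⟨c x, rfl⟩, ⟨x, hx, rfl⟩⟩, hx, rfl⟩

lemma fibPart_card (Y : Set X) {K : Type*} [Fintype K] (c : X → K) :
    (fibPart Y c).Finite ∧ (fibPart Y c).ncard ≤ Fintype.card K := by
  have hsub : fibPart Y c ⊆ (fun k => {x ∈ Y | c x = k}) '' Set.univ := by
    rintro U ⟨⟨k, rfl⟩, -⟩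
    exact ⟨k, trivial, rfl⟩
  have hfin : ((fun k => {x ∈ Y | c x = k}) '' Set.univ).Finite :=
    Set.finite_univ.image _
  refine ⟨hfin.subset hsub, ?_⟩
  calc (fibPart Y c).ncard ≤ ((fun k => {x ∈ Y | c x = k}) '' Set.univ).ncard :=
        Set.ncard_le_ncard hsub hfin
    _ ≤ (Set.univ : Set K).ncard := Set.ncard_image_le Set.finite_univ
    _ = Fintype.card K := by rw [Set.ncard_univ, Nat.card_eq_fintype_card]

lemma fibPart_mem {Y : Set X} {K : Type*} {c : X → K} {x : X} (hx : x ∈ Y) :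
    {y ∈ Y | c y = c x} ∈ fibPart Y c ∧ x ∈ {y ∈ Y | c y = c x} :=
  ⟨⟨⟨c x, rfl⟩, ⟨x, hx, rfl⟩⟩, hx, rfl⟩

-- bound for the top part
def g1 (f : ℕ → ℕ) (cA : ℕ) : ℕ → ℕ :=
  fun n => f n * ((n + 1) ^ f n * ((2 ^ f n) ^ f n) ^ cA)

lemma g1_mono {f : ℕ → ℕ} (hf : Monotone f) (cA : ℕ) : Monotone (g1 f cA) := by
  intro n m hnm
  have hfnm := hf hnm
  have h2 : (2:ℕ) ^ f n ≤ 2 ^ f m := Nat.pow_le_pow_right (by norm_num) hfnm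
  refine Nat.mul_le_mul hfnm (Nat.mul_le_mul ?_ ?_)
  · calc (n+1) ^ f n ≤ (m+1) ^ f n := Nat.pow_le_pow_left (by omega) _
      _ ≤ (m+1) ^ f m := Nat.pow_le_pow_right (by omega) hfnm
  · refine Nat.pow_le_pow_left ?_ _
    calc (2 ^ f n) ^ f n ≤ (2 ^ f m) ^ f n := Nat.pow_le_pow_left h2 _
      _ ≤ (2 ^ f m) ^ f m := Nat.pow_le_pow_right (Nat.pow_pos (by norm_num)) hfnm

lemma tunOn_empty {g : ℕ → ℕ} : TunOn R (∅ : Set X) g := by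
  intro P hP hPfin
  have hPe : P = ∅ := by
    ext p
    simp only [Set.mem_empty_iff_false, iff_false]
    intro hp
    obtain ⟨x, hx⟩ := hP.1 p hp
    have : x ∈ ⋃₀ P := ⟨p, hp, hx⟩
    rw [hP.2.2] at this
    exact this
  subst hPe
  exact ⟨∅, ⟨by simp, by simp, by simp⟩, by simp [Refines], fun a U hU => absurd hU (by simp),
    Set.finite_empty, by simp⟩

-- restricting a partition to a subset
def restrictPart (P : Set (Set X)) (C : Set X) : Set (Set X) :=
  {s | (∃ p ∈ P, s = p ∩ C) ∧ s.Nonempty}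

lemma restrictPart_POn {Y C : Set X} {P : Set (Set X)} (hP : POn Y P) (hC : C ⊆ Y) :
    POn C (restrictPart P C) := by
  refine ⟨fun U hU => hU.2, ?_, ?_⟩
  · rintro U ⟨⟨p, hp, rfl⟩, -⟩ V ⟨⟨p', hp', rfl⟩, -⟩ hne
    have hpp : p ≠ p' := by rintro rfl; exact hne rfl
    exact Set.disjoint_of_subset Set.inter_subset_left Set.inter_subset_left
      (hP.2.1 p hp p' hp' hpp)
  · ext y
    constructor
    · rintro ⟨s, ⟨⟨p, hp, rfl⟩, -⟩, hy⟩
      exact hy.2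
    · intro hy
      obtain ⟨hpP, hyp⟩ := pc_mem hP (hC hy)
      exact ⟨pc P y ∩ C, ⟨⟨pc P y, hpP, rfl⟩, ⟨y, hyp, hy⟩⟩, hyp, hy⟩

lemma restrictPart_finite {C : Set X} {P : Set (Set X)} (hPfin : P.Finite) :
    (restrictPart P C).Finite ∧ (restrictPart P C).ncard ≤ P.ncard := by
  have hsub : restrictPart P C ⊆ (fun p => p ∩ C) '' P := by
    rintro s ⟨⟨p, hp, rfl⟩, -⟩; exact ⟨p, hp, rfl⟩
  exact ⟨(hPfin.image _).subset hsub,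
    le_trans (Set.ncard_le_ncard hsub (hPfin.image _)) (Set.ncard_image_le hPfin)⟩

lemma restrictPart_refines {C : Set X} {P : Set (Set X)} : Refines (restrictPart P C) P := by
  rintro s ⟨⟨p, hp, rfl⟩, -⟩
  exact ⟨p, hp, Set.inter_subset_left⟩

-- every point of `Y` reaches the top part
variable (R) in
lemma exists_top {Y : Set X} {h : ℕ} (hH : HOn R Y h) {x : X} (hx : x ∈ Y) :
    ∃ y ∈ topOn R Y, sOn R Y x y := by
  by_contra hcon
  push_neg at hcon
  have step : ∀ z : X, z ∈ Y ∧ sOn R Y x z →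
      ∃ w, (w ∈ Y ∧ sOn R Y x w) ∧ sOn R Y z w ∧ ¬ sOn R Y w z := by
    rintro z ⟨hz, hxz⟩
    have hzT : z ∉ topOn R Y := fun ht => hcon z ht hxz
    have h2 : ¬ ∀ y, sOn R Y z y → sOn R Y y z := fun hall => hzT ⟨hz, hall⟩
    push_neg at h2
    obtain ⟨w, hzw, hwz⟩ := h2
    have hne : z ≠ w := by rintro rfl; exact hwz (sOn_refl _)
    exact ⟨w, ⟨mem_right_of_sOn_ne hzw hne, sOn_trans hxz hzw⟩, hzw, hwz⟩
  let T' := {z : X // z ∈ Y ∧ sOn R Y x z}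
  let nxt : T' → T' := fun z => ⟨(step z.1 z.2).choose, (step z.1 z.2).choose_spec.1⟩
  let c : ℕ → T' := fun k => nxt^[k] ⟨x, hx, sOn_refl x⟩
  apply hH (fun i => (c i).1)
  intro i _
  have hit : c (i + 1) = nxt (c i) := Function.iterate_succ_apply' nxt i _
  show sOn R Y (c i).1 (c (i+1)).1 ∧ ¬ sOn R Y (c (i+1)).1 (c i).1
  rw [hit]
  exact (step (c i).1 (c i).2).choose_spec.2

-- removing the top part decreases the height
variable (R) in
lemma hOn_diff_top {Y : Set X} {h : ℕ} (hh : 1 ≤ h) (hH : HOn R Y (h + 1)) :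
    HOn R (Y \ topOn R Y) h := by
  intro c hc
  set T := topOn R Y with hT
  have hmem : ∀ i, i + 1 < h + 1 → c i ∈ Y \ T ∧ c (i + 1) ∈ Y \ T := by
    intro i hi
    have hne : c i ≠ c (i + 1) := fun he => (hc i hi).2 (he ▸ sOn_refl _)
    exact ⟨mem_left_of_sOn_ne (hc i hi).1 hne, mem_right_of_sOn_ne (hc i hi).1 hne⟩
  have hlast : c h ∈ Y \ T := by
    have h2 := hmem (h - 1) (by omega)
    have he : h - 1 + 1 = h := by omega
    rw [he] at h2
    exact h2.2
  have h3 : ¬ ∀ y, sOn R Y (c h) y → sOn R Y y (c h) := fun hall => hlast.2 ⟨hlast.1, hall⟩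
  push_neg at h3
  obtain ⟨w, hw1, hw2⟩ := h3
  apply hH (fun i => if i ≤ h then c i else w)
  intro i hi
  rcases lt_or_ge i h with hlt | hge
  · simp only [if_pos (by omega : i ≤ h), if_pos (by omega : i + 1 ≤ h)]
    have hs := hc i (by omega)
    refine ⟨sOn_mono Set.diff_subset hs.1, fun hback => ?_⟩
    exact hs.2 (sOn_diff_top hback (hmem i (by omega)).1.2)
  · have hieq : i = h := by omega
    subst hieq
    simp only [if_pos (le_refl i), if_neg (by omega : ¬ i + 1 ≤ i)]
    exact ⟨hw1, hw2⟩

variable (R) in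
lemma top_tunable [Fintype A] {f : ℕ → ℕ} (hf : Monotone f) (Y : Set X)
    (hTop : ∀ x ∈ Y, ∀ y, sOn R Y x y → sOn R Y y x)
    (hcl : ∀ x ∈ Y, TunOn R (clOn R Y x) f) :
    TunOn R Y (g1 f (Fintype.card A)) := by
  rcases Y.eq_empty_or_nonempty with rfl | ⟨x₀, hx₀⟩
  · exact tunOn_empty
  intro P hP hPfin
  set n := P.ncard with hn
  have hn1 : 0 < n := by
    have hx : x₀ ∈ ⋃₀ P := hP.2.2.symm ▸ hx₀
    obtain ⟨p, hp, -⟩ := hx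
    exact (Set.ncard_pos hPfin).2 ⟨p, hp⟩
  -- edges within Y stay inside clusters
  have hedge : ∀ x ∈ Y, ∀ y ∈ Y, ∀ a, R a x y → y ∈ clOn R Y x := by
    intro x hx y hy a hr
    have hs : sOn R Y x y := Relation.ReflTransGen.single ⟨⟨a, hr⟩, hx, hy⟩
    exact ⟨hs, hTop x hx y hs⟩
  -- tuned partitions of each cluster
  have key : ∀ C : Set X, (∃ x ∈ Y, C = clOn R Y x) →
      ∃ Qc : Set (Set X), POn C Qc ∧ Refines Qc P ∧ TunedFrame R Qc ∧ Qc.Finite ∧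
        Qc.ncard ≤ f n := by
    rintro C ⟨x, hx, rfl⟩
    set C := clOn R Y x with hC
    set PC : Set (Set X) := {s | (∃ p ∈ P, s = p ∩ C) ∧ s.Nonempty} with hPC
    have hPCsub : PC ⊆ (fun p => p ∩ C) '' P := by
      rintro s ⟨⟨p, hp, rfl⟩, -⟩; exact ⟨p, hp, rfl⟩
    have hPCfin : PC.Finite := (hPfin.image _).subset hPCsub
    have hPCcard : PC.ncard ≤ n := le_trans (Set.ncard_le_ncard hPCsub (hPfin.image _))
      (Set.ncard_image_le hPfin)
    have hPCpart : POn C PC := by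
      refine ⟨fun U hU => hU.2, ?_, ?_⟩
      · rintro U ⟨⟨p, hp, rfl⟩, -⟩ V ⟨⟨p', hp', rfl⟩, -⟩ hne
        have hpp : p ≠ p' := by rintro rfl; exact hne rfl
        exact Set.disjoint_of_subset Set.inter_subset_left Set.inter_subset_left
          (hP.2.1 p hp p' hp' hpp)
      · ext y
        constructor
        · rintro ⟨s, ⟨⟨p, hp, rfl⟩, -⟩, hy⟩
          exact hy.2
        · intro hy
          have hyY : y ∈ Y := clOn_subset hx hy
          obtain ⟨hpP, hyp⟩ := pc_mem hP hyY
          exact ⟨pc P y ∩ C, ⟨⟨pc P y, hpP, rfl⟩, ⟨y, hyp, hy⟩⟩, hyp, hy⟩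
    obtain ⟨Qc, hQc1, hQc2, hQc3, hQc4, hQc5⟩ := hcl x hx PC hPCpart hPCfin
    refine ⟨Qc, hQc1, ?_, hQc3, hQc4, le_trans hQc5 (le_trans (hf hPCcard) (le_refl _))⟩
    intro u hu
    obtain ⟨s, hs, hus⟩ := hQc2 u hu
    obtain ⟨⟨p, hp, rfl⟩, -⟩ := hs
    exact ⟨p, hp, hus.trans Set.inter_subset_left⟩
  -- choice of tuned cluster partitions
  have hQfun : ∀ C : Set X, ∃ Qc : Set (Set X),
      ((∃ x ∈ Y, C = clOn R Y x) → POn C Qc ∧ Refines Qc P ∧ TunedFrame R Qc) ∧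
      Qc.Finite ∧ Qc.ncard ≤ f n := by
    intro C
    by_cases hC : ∃ x ∈ Y, C = clOn R Y x
    · obtain ⟨Qc, h1, h2, h3, h4, h5⟩ := key C hC
      exact ⟨Qc, fun _ => ⟨h1, h2, h3⟩, h4, h5⟩
    · exact ⟨∅, fun h => absurd h hC, Set.finite_empty, by simp⟩
  choose Qf hQf using hQfun
  have hQfP : ∀ x ∈ Y, POn (clOn R Y x) (Qf (clOn R Y x)) :=
    fun x hx => ((hQf _).1 ⟨x, hx, rfl⟩).1
  have hfn1 : 0 < f n := by
    have hpart := hQfP x₀ hx₀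
    have hx : x₀ ∈ ⋃₀ Qf (clOn R Y x₀) := hpart.2.2.symm ▸ mem_clOn_self x₀
    obtain ⟨q, hq, -⟩ := hx
    exact lt_of_lt_of_le ((Set.ncard_pos (hQf _).2.1).2 ⟨q, hq⟩) (hQf _).2.2
  -- enumerations
  obtain ⟨ιP, hιP⟩ := exists_injOn_fin hPfin (le_refl n) hn1
  have hιex : ∀ C : Set X, ∃ ι : Set X → Fin (f n), Set.InjOn ι (Qf C) :=
    fun C => exists_injOn_fin (hQf C).2.1 (hQf C).2.2 hfn1
  choose ι hι using hιex
  -- labels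
  set lbl : Set X → Option (Fin n) :=
    fun q => if h : ∃ p ∈ P, q ⊆ p then some (ιP h.choose) else none with hlbldef
  have hlbl : ∀ q : Set X, q.Nonempty → ∀ p ∈ P, q ⊆ p → lbl q = some (ιP p) := by
    intro q hq p hp hqp
    have h : ∃ p ∈ P, q ⊆ p := ⟨p, hp, hqp⟩
    rw [hlbldef]
    simp only [dif_pos h]
    congr 1
    apply congrArg
    by_contra hne
    obtain ⟨z, hz⟩ := hq
    exact Set.disjoint_left.1 (hP.2.1 _ h.choose_spec.1 _ hp hne)
      (h.choose_spec.2 hz) (hqp hz)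
  -- types
  set typ : Set X → (Fin (f n) → Option (Fin n)) × (A → Fin (f n) → Fin (f n) → Bool) :=
    fun C =>
      (fun i => if h : ∃ q ∈ Qf C, ι C q = i then lbl h.choose else none,
       fun a i j => decide (∃ q ∈ Qf C, ∃ q' ∈ Qf C, ι C q = i ∧ ι C q' = j ∧
         ∃ u ∈ q, ∃ v ∈ q', R a u v)) with htypdef
  have htyp1 : ∀ C : Set X, ∀ q ∈ Qf C, (typ C).1 (ι C q) = lbl q := by
    intro C q hq
    have h : ∃ q' ∈ Qf C, ι C q' = ι C q := ⟨q, hq, rfl⟩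
    rw [htypdef]
    simp only [dif_pos h]
    congr 1
    exact hι C h.choose_spec.1 hq h.choose_spec.2
  -- the coloring and final partition
  set col : X → Fin (f n) × ((Fin (f n) → Option (Fin n)) × (A → Fin (f n) → Fin (f n) → Bool)) :=
    fun x => (ι (clOn R Y x) (pc (Qf (clOn R Y x)) x), typ (clOn R Y x)) with hcoldef
  refine ⟨fibPart Y col, fibPart_POn Y col, ?_, ?_, (fibPart_card Y col).1, ?_⟩
  -- refinement
  · rintro U ⟨⟨k, rfl⟩, hUne⟩
    obtain ⟨x, hxY, hxk⟩ := hUne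
    refine ⟨pc P x, (pc_mem hP hxY).1, ?_⟩
    rintro x' ⟨hx'Y, hx'k⟩
    have hcc : col x' = col x := by rw [hx'k, hxk]
    -- common piece labels
    have hpcP : ∀ z ∈ Y, (typ (clOn R Y z)).1 (ι (clOn R Y z) (pc (Qf (clOn R Y z)) z)) =
        some (ιP (pc P z)) := by
      intro z hz
      have hpart := hQfP z hz
      obtain ⟨hq, hzq⟩ := pc_mem hpart (mem_clOn_self z)
      rw [htyp1 _ _ hq]
      obtain ⟨p, hp, hqp⟩ := ((hQf _).1 ⟨z, hz, rfl⟩).2.1 _ hq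
      have : pc P z = p := pc_eq hP hp (hqp hzq)
      rw [this]
      exact hlbl _ ⟨z, hzq⟩ p hp hqp
    have h1 := hpcP x hxY
    have h2 := hpcP x' hx'Y
    have hfst : ι (clOn R Y x') (pc (Qf (clOn R Y x')) x') =
        ι (clOn R Y x) (pc (Qf (clOn R Y x)) x) := congrArg Prod.fst hcc
    have hsnd : typ (clOn R Y x') = typ (clOn R Y x) := congrArg Prod.snd hcc
    rw [hfst, hsnd, h1] at h2
    have := hιP (pc_mem hP hxY).1 (pc_mem hP hx'Y).1 (Option.some.inj h2)
    rw [this]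
    exact (pc_mem hP hx'Y).2
  -- tunedness
  · intro a U hU V hV hex x' hx'U
    obtain ⟨⟨k, rfl⟩, -⟩ := hU
    obtain ⟨⟨k', rfl⟩, -⟩ := hV
    obtain ⟨x, ⟨hxY, hxk⟩, y, ⟨hyY, hyk'⟩, hr⟩ := hex
    obtain ⟨hx'Y, hx'k⟩ := hx'U
    set C := clOn R Y x with hCdef
    have hyC : y ∈ C := hedge x hxY y hyY a hr
    have hCy : clOn R Y y = C := clOn_eq_of_mem hyC
    have hpart := hQfP x hxY
    obtain ⟨hqx, hxqx⟩ := pc_mem hpart (mem_clOn_self x)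
    obtain ⟨hqy, hyqy⟩ := pc_mem hpart hyC
    -- decode k and k'
    have hky : k' = (ι C (pc (Qf C) y), typ C) := by
      rw [← hyk', hcoldef]; simp only [hCy]
    have hkx : k = (ι C (pc (Qf C) x), typ C) := by
      rw [← hxk, hcoldef]
    -- the edge bit is set
    have hbit : (typ C).2 a (ι C (pc (Qf C) x)) (ι C (pc (Qf C) y)) = true := by
      rw [htypdef]
      exact decide_eq_true ⟨_, hqx, _, hqy, rfl, rfl, x, hxqx, y, hyqy, hr⟩
    -- transfer to the cluster of x'
    set C' := clOn R Y x' with hC'def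
    have hfst : ι C' (pc (Qf C') x') = ι C (pc (Qf C) x) := by
      have := congrArg Prod.fst (hx'k.trans hkx)
      exact this
    have hsnd : typ C' = typ C := by
      have := congrArg Prod.snd (hx'k.trans hkx)
      exact this
    have hbit' : (typ C').2 a (ι C (pc (Qf C) x)) (ι C (pc (Qf C) y)) = true := by
      rw [hsnd]; exact hbit
    rw [htypdef] at hbit'
    have hdec := of_decide_eq_true hbit'
    obtain ⟨q, hq, q', hq', hqi, hq'j, u, hu, v, hv, huv⟩ := hdec
    have hpart' : POn C' (Qf C') := hQfP x' hx'Y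
    obtain ⟨hqx', hx'qx'⟩ := pc_mem hpart' (mem_clOn_self x')
    have hqeq : q = pc (Qf C') x' := hι C' hq hqx' (by rw [hqi, hfst])
    have htuned : TunedFrame R (Qf C') := ((hQf _).1 ⟨x', hx'Y, rfl⟩).2.2
    obtain ⟨b, hbq', hb⟩ := htuned a q hq q' hq' ⟨u, hu, v, hv, huv⟩ x' (hqeq ▸ hx'qx')
    -- b is in V
    have hq'sub : q' ⊆ C' := by
      intro z hz
      have hz2 : z ∈ ⋃₀ Qf C' := ⟨q', hq', hz⟩
      rwa [hpart'.2.2] at hz2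
    have hbC' : b ∈ C' := hq'sub hbq'
    have hbY : b ∈ Y := clOn_subset hx'Y hbC'
    have hclb : clOn R Y b = C' := clOn_eq_of_mem hbC'
    have hpcb : pc (Qf C') b = q' := pc_eq hpart' hq' hbq'
    refine ⟨b, ⟨hbY, ?_⟩, hb⟩
    rw [hcoldef]
    simp only [hclb, hpcb, hky, hq'j, hsnd]
  -- cardinality
  · refine le_trans (fibPart_card Y col).2 ?_
    rw [g1]
    simp only [Fintype.card_prod, Fintype.card_fun, Fintype.card_option, Fintype.card_fin,
      Fintype.card_bool]
    exact le_refl _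

-- the global bound
def G (f : ℕ → ℕ) (cA : ℕ) : ℕ → ℕ → ℕ
  | 0 => g1 f cA
  | (h + 1) => fun n => g1 f cA n + G f cA h (n * (2 ^ g1 f cA n) ^ cA)

lemma G_mono {f : ℕ → ℕ} (hf : Monotone f) (cA : ℕ) : ∀ h, Monotone (G f cA h) := by
  intro h
  induction h with
  | zero => exact g1_mono hf cA
  | succ h ih =>
    intro n m hnm
    refine Nat.add_le_add (g1_mono hf cA hnm) (ih ?_)
    refine Nat.mul_le_mul hnm (Nat.pow_le_pow_left (Nat.pow_le_pow_right (by norm_num)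
      (g1_mono hf cA hnm)) _)

variable (R) in
lemma main_induction [Fintype A] {f : ℕ → ℕ} (hf : Monotone f) :
    ∀ h : ℕ, ∀ Y : Set X, HOn R Y (h + 1) →
      (∀ x ∈ Y, TunOn R (clOn R Y x) f) → TunOn R Y (G f (Fintype.card A) h) := by
  intro h
  induction h with
  | zero =>
    intro Y hH hcl
    refine top_tunable R hf Y ?_ hcl
    intro x hx y hxy
    by_contra hback
    exact hH (fun i => if i = 0 then x else y) (by
      intro i hi
      have : i = 0 := by omega
      subst this
      simpa using ⟨hxy, hback⟩)
  | succ h ih =>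
    intro Y hH hcl
    rcases Y.eq_empty_or_nonempty with rfl | ⟨y₀, hy₀⟩
    · exact tunOn_empty
    intro P hP hPfin
    set cA := Fintype.card A with hcA
    set n := P.ncard with hn
    have hn1 : 0 < n := by
      have hx : y₀ ∈ ⋃₀ P := hP.2.2.symm ▸ hy₀
      obtain ⟨p, hp, -⟩ := hx
      exact (Set.ncard_pos hPfin).2 ⟨p, hp⟩
    set T := topOn R Y with hT
    have hTY : T ⊆ Y := fun z hz => hz.1
    -- T is a "height one" region
    have hTopT : ∀ x ∈ T, ∀ y, sOn R T x y → sOn R T y x := by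
      intro x hx y hxy
      have hxyY : sOn R Y x y := sOn_mono hTY hxy
      have hyT : y ∈ T := top_upclosed hx hxyY
      exact sOn_top (hx.2 y hxyY) hyT
    have hclT : ∀ x ∈ T, TunOn R (clOn R T x) f := by
      intro x hx
      rw [clOn_top_eq hx]
      exact hcl x hx.1
    -- tuned partition of the top part
    obtain ⟨QT, hQT1, hQT2, hQT3, hQT4, hQT5⟩ :=
      top_tunable R hf T hTopT hclT (restrictPart P T) (restrictPart_POn hP hTY)
        (restrictPart_finite hPfin).1
    have hQT5' : QT.ncard ≤ g1 f cA n :=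
      le_trans hQT5 (g1_mono hf cA (restrictPart_finite hPfin).2)
    have hQTrefP : Refines QT P := by
      intro u hu
      obtain ⟨s, hs, hus⟩ := hQT2 u hu
      obtain ⟨p, hp, hsp⟩ := restrictPart_refines s hs
      exact ⟨p, hp, hus.trans hsp⟩
    have hQTsub : ∀ u ∈ QT, u ⊆ T := by
      intro u hu z hz
      have : z ∈ ⋃₀ QT := ⟨u, hu, hz⟩
      rwa [hQT1.2.2] at this
    set Y' := Y \ T with hY'
    rcases Y'.eq_empty_or_nonempty with hY'e | ⟨z₀, hz₀⟩
    · -- the whole region is the top part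
      have hTeq : T = Y := by
        apply Set.Subset.antisymm hTY
        intro z hz
        by_contra hzT
        have : z ∈ Y' := ⟨hz, hzT⟩
        rw [hY'e] at this
        exact this
      refine ⟨QT, hTeq ▸ hQT1, hQTrefP, hQT3, hQT4, ?_⟩
      exact le_trans hQT5' (Nat.le_add_right _ _)
    -- the general case
    have hTne : T.Nonempty := by
      obtain ⟨y, hy, -⟩ := exists_top R hH hy₀
      exact ⟨y, hy⟩
    have hQTne : QT.Nonempty := by
      obtain ⟨t, ht⟩ := hTne
      have : t ∈ ⋃₀ QT := hQT1.2.2.symm ▸ ht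
      obtain ⟨u, hu, -⟩ := this
      exact ⟨u, hu⟩
    have hg1pos : 0 < g1 f cA n :=
      lt_of_lt_of_le ((Set.ncard_pos hQT4).2 hQTne) hQT5'
    obtain ⟨ιT, hιT⟩ := exists_injOn_fin hQT4 hQT5' hg1pos
    obtain ⟨ιP, hιP⟩ := exists_injOn_fin hPfin (le_refl n) hn1
    -- refine the bottom region by one-step behaviour into QT
    set pat : X → (A → Fin (g1 f cA n) → Bool) :=
      fun x a i => decide (∃ V ∈ QT, ιT V = i ∧ ∃ b ∈ V, R a x b) with hpatdef
    set ψ : X → Fin n × (A → Fin (g1 f cA n) → Bool) := fun x => (ιP (pc P x), pat x)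
      with hψdef
    set P'' := fibPart Y' ψ with hP''
    have hP''P : POn Y' P'' := fibPart_POn Y' ψ
    have hP''card : P''.ncard ≤ n * (2 ^ g1 f cA n) ^ cA := by
      refine le_trans (fibPart_card Y' ψ).2 ?_
      simp only [Fintype.card_prod, Fintype.card_fun, Fintype.card_fin, Fintype.card_bool]
      exact le_refl _
    -- apply the induction hypothesis to the bottom region
    have hH' : HOn R Y' (h + 1) := hOn_diff_top R (by omega) hH
    have hcl' : ∀ x ∈ Y', TunOn R (clOn R Y' x) f := by
      intro x hx
      rw [hY', clOn_diff_top_eq hx.2]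
      exact hcl x hx.1
    obtain ⟨QB, hQB1, hQB2, hQB3, hQB4, hQB5⟩ := ih Y' hH' hcl' P'' hP''P (fibPart_card Y' ψ).1
    have hQB5' : QB.ncard ≤ G f cA h (n * (2 ^ g1 f cA n) ^ cA) :=
      le_trans hQB5 (G_mono hf cA h hP''card)
    have hQBsub : ∀ u ∈ QB, u ⊆ Y' := by
      intro u hu z hz
      have : z ∈ ⋃₀ QB := ⟨u, hu, hz⟩
      rwa [hQB1.2.2] at this
    have hQBrefP : Refines QB P := by
      intro u hu
      obtain ⟨W, hW, hUW⟩ := hQB2 u hu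
      obtain ⟨⟨k, rfl⟩, hWne⟩ := hW
      obtain ⟨z, hzY', hzk⟩ := hWne
      refine ⟨pc P z, (pc_mem hP hzY'.1).1, ?_⟩
      intro w hw
      obtain ⟨hwY', hwk⟩ := hUW hw
      have : ψ w = ψ z := by rw [hwk, hzk]
      have hfst : ιP (pc P w) = ιP (pc P z) := congrArg Prod.fst this
      have := hιP (pc_mem hP hwY'.1).1 (pc_mem hP hzY'.1).1 hfst
      rw [← this]
      exact (pc_mem hP hwY'.1).2
    -- the combined partition
    refine ⟨QT ∪ QB, ?_, ?_, ?_, hQT4.union hQB4, ?_⟩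
    · refine ⟨?_, ?_, ?_⟩
      · rintro U (hU | hU)
        exacts [hQT1.1 U hU, hQB1.1 U hU]
      · rintro U (hU | hU) V (hV | hV) hne
        · exact hQT1.2.1 U hU V hV hne
        · exact Set.disjoint_of_subset (hQTsub U hU) (hQBsub V hV)
            (Set.disjoint_sdiff_right)
        · exact Set.disjoint_of_subset (hQBsub U hU) (hQTsub V hV)
            (Set.disjoint_sdiff_left)
        · exact hQB1.2.1 U hU V hV hne
      · rw [Set.sUnion_union, hQT1.2.2, hQB1.2.2]
        exact Set.union_diff_cancel hTY
    · rintro u (hu | hu)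
      exacts [hQTrefP u hu, hQBrefP u hu]
    · intro a U hU V hV hex x' hx'
      obtain ⟨x, hxU, y, hyV, hr⟩ := hex
      rcases hU with hU | hU
      · rcases hV with hV | hV
        · exact hQT3 a U hU V hV ⟨x, hxU, y, hyV, hr⟩ x' hx'
        · -- no edges from the top part to the bottom part
          exfalso
          have hxT : x ∈ T := hQTsub U hU hxU
          have hyY' : y ∈ Y' := hQBsub V hV hyV
          have hs : sOn R Y x y := Relation.ReflTransGen.single ⟨⟨a, hr⟩, hxT.1, hyY'.1⟩
          exact hyY'.2 (top_upclosed hxT hs)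
      · rcases hV with hV | hV
        · -- edges from the bottom part into the top part: use the pattern
          obtain ⟨W, hW, hUW⟩ := hQB2 U hU
          obtain ⟨⟨k, rfl⟩, -⟩ := hW
          have hψ : ψ x' = ψ x := by rw [(hUW hx').2, (hUW hxU).2]
          have hbit : pat x a (ιT V) = true :=
            decide_eq_true ⟨V, hV, rfl, y, hyV, hr⟩
          have hbit' : pat x' a (ιT V) = true := by
            have := congrArg (fun q => q.2 a (ιT V)) hψ
            simpa using this.trans hbit
          obtain ⟨V', hV', hVeq, b, hbV', hb⟩ := of_decide_eq_true hbit'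
          have : V' = V := hιT hV' hV hVeq
          subst this
          exact ⟨b, hbV', hb⟩
        · exact hQB3 a U hU V hV ⟨x, hxU, y, hyV, hr⟩ x' hx'
    · refine le_trans (Set.ncard_union_le QT QB) ?_
      exact Nat.add_le_add hQT5' hQB5'

-- transfer between the global notions and the region-based ones

lemma sOn_univ_iff {x y : X} :
    sOn R (Set.univ : Set X) x y ↔ Relation.ReflTransGen (unionRel R) x y := by
  constructor
  · intro h
    induction h with
    | refl => exact Relation.ReflTransGen.refl
    | tail _ hstep ih => exact ih.tail hstep.1
  · intro h
    induction h with
    | refl => exact Relation.ReflTransGen.refl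
    | tail _ hstep ih => exact ih.tail ⟨hstep, trivial, trivial⟩

lemma clOn_univ_eq (x : X) : clOn R (Set.univ : Set X) x = clusterOf (unionRel R) x := by
  ext y
  exact and_congr sOn_univ_iff sOn_univ_iff

lemma hOn_univ {h : ℕ} (hH : HeightLe (unionRel R) h) : HOn R (Set.univ : Set X) h := by
  intro c hc
  apply hH c
  intro i hi
  obtain ⟨h1, h2⟩ := hc i hi
  exact ⟨sOn_univ_iff.1 h1, fun hb => h2 (sOn_univ_iff.2 hb)⟩

-- transfer of cluster tunability from the subtype formulation to sets
variable (R) in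
lemma cluster_transfer {f : ℕ → ℕ} (hf : Monotone f) (C : Set X)
    (hT : Tunable (fun a (p q : C) => R a p.1 q.1) f) : TunOn R C f := by
  intro P hP hPfin
  set P' : Set (Set C) := (fun p => Subtype.val ⁻¹' p) '' P with hP'def
  have hP'part : IsPartition P' := by
    refine ⟨?_, ?_, ?_⟩
    · rintro U ⟨p, hp, rfl⟩
      obtain ⟨z, hz⟩ := hP.1 p hp
      have hzC : z ∈ C := by
        rw [← hP.2.2]; exact ⟨p, hp, hz⟩
      exact ⟨⟨z, hzC⟩, hz⟩
    · rintro U ⟨p, hp, rfl⟩ V ⟨p', hp', rfl⟩ hne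
      have hpp : p ≠ p' := by rintro rfl; exact hne rfl
      rw [Set.disjoint_left]
      rintro ⟨z, hzC⟩ hz hz'
      exact Set.disjoint_left.1 (hP.2.1 p hp p' hp' hpp) hz hz'
    · ext ⟨z, hzC⟩
      simp only [Set.mem_univ, iff_true]
      have : z ∈ ⋃₀ P := hP.2.2.symm ▸ hzC
      obtain ⟨p, hp, hzp⟩ := this
      exact ⟨Subtype.val ⁻¹' p, ⟨p, hp, rfl⟩, hzp⟩
  obtain ⟨Q', hQ'1, hQ'2, hQ'3, hQ'4, hQ'5⟩ := hT P' hP'part (hPfin.image _)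
  set Q : Set (Set X) := (fun u => Subtype.val '' u) '' Q' with hQdef
  have hvalinj : Function.Injective (Subtype.val : C → X) := Subtype.val_injective
  refine ⟨Q, ⟨?_, ?_, ?_⟩, ?_, ?_, hQ'4.image _, ?_⟩
  · rintro U ⟨u, hu, rfl⟩
    exact (hQ'1.1 u hu).image _
  · rintro U ⟨u, hu, rfl⟩ V ⟨u', hu', rfl⟩ hne
    have huu : u ≠ u' := by rintro rfl; exact hne rfl
    exact (Set.disjoint_image_iff hvalinj).2 (hQ'1.2.1 u hu u' hu' huu)
  · rw [← Set.image_sUnion, hQ'1.2.2]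
    simp
  · rintro U ⟨u, hu, rfl⟩
    obtain ⟨v, hv, huv⟩ := hQ'2 u hu
    obtain ⟨p, hp, rfl⟩ := hv
    refine ⟨p, hp, ?_⟩
    exact (Set.image_mono huv).trans (Set.image_preimage_subset _ _)
  · intro a U hU V hV hex x' hx'
    obtain ⟨u, hu, rfl⟩ := hU
    obtain ⟨v, hv, rfl⟩ := hV
    obtain ⟨x, hxU, y, hyV, hr⟩ := hex
    obtain ⟨xb, hxb, rfl⟩ := hxU
    obtain ⟨yb, hyb, rfl⟩ := hyV
    obtain ⟨xb', hxb', rfl⟩ := hx'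
    obtain ⟨b, hbv, hb⟩ := hQ'3 a u hu v hv ⟨xb, hxb, yb, hyb, hr⟩ xb' hxb'
    exact ⟨b.1, ⟨b, hbv, rfl⟩, hb⟩
  · calc Q.ncard ≤ Q'.ncard := Set.ncard_image_le hQ'4
      _ ≤ f P'.ncard := hQ'5
      _ ≤ f P.ncard := hf (Set.ncard_image_le hPfin)

end Stmt15Aux

theorem stmt15 {A : Type*} [Fintype A] (h : ℕ) (hh : 1 ≤ h)
    (f : ℕ → ℕ) (hf : Monotone f) :
    ∃ g : ℕ → ℕ, ∀ (X : Type u) [Nonempty X] (R : A → X → X → Prop),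
      HeightLe (unionRel R) h →
      (∀ x : X, Tunable (fun a (p q : clusterOf (unionRel R) x) => R a p.1 q.1) f) →
      Tunable R g := by
  obtain ⟨h', rfl⟩ : ∃ h', h = h' + 1 := ⟨h - 1, by omega⟩
  refine ⟨Stmt15Aux.G f (Fintype.card A) h', ?_⟩
  intro X _ R hH hcl
  have hmain := Stmt15Aux.main_induction R hf h' Set.univ (Stmt15Aux.hOn_univ hH) ?_
  · intro P hP hPfin
    obtain ⟨Q, hQ1, hQ2, hQ3, hQ4, hQ5⟩ := hmain P hP hPfin
    exact ⟨Q, hQ1, hQ2, hQ3, hQ4, hQ5⟩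
  · intro x _
    rw [Stmt15Aux.clOn_univ_eq]
    exact Stmt15Aux.cluster_transfer R hf _ (hcl x)
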